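/- Let G be a weighted undirected graph, let s1, s2 be two vertices, and let R = (z_0 = s1, z_1, …, z_k) be a shortest path from s1 to some vertex t. Then the function i ↦ dist(s1, z_i) − dist(s2, z_i) is nondecreasing in i. -/
import Mathlib

/-- The total weight of a walk in a weighted graph: the sum of the weights of its edges. -/
def walkWeight {V : Type} {G : SimpleGraph V} (w : Sym2 V → ℝ) {a b : V} (p : G.Walk a b) : ℝ :=
  (p.edges.map w).sum

section aux
variable {V : Type} {G : SimpleGraph V} (w : Sym2 V → ℝ)

lemma walkWeight_cons {a b c : V} (h : G.Adj a b) (q : G.Walk b c) :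
    walkWeight w (q.cons h) = w s(a, b) + walkWeight w q := by
  simp [walkWeight]

lemma walkWeight_append {a b c : V} (p : G.Walk a b) (q : G.Walk b c) :
    walkWeight w (p.append q) = walkWeight w p + walkWeight w q := by
  simp [walkWeight, SimpleGraph.Walk.edges_append]

lemma support_get_eq_getVert {a b : V} (p : G.Walk a b) (i : ℕ) (h : i < p.support.length) :
    p.support.get ⟨i, h⟩ = p.getVert i := by
  induction p generalizing i with
  | nil => cases i with
    | zero => rfl
    | succ n => simp at h
  | cons hadj q ih =>
    cases i with
    | zero => rfl
    | succ n =>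
      simp only [SimpleGraph.Walk.support_cons] at h ⊢
      exact ih n (by simpa using h)

variable (dist : V → V → ℝ)
variable (hdist : ∀ a b : V, IsLeast {x : ℝ | ∃ p : G.Walk a b, walkWeight w p = x} (dist a b))

include hdist in
lemma dist_le_walk {a b : V} (q : G.Walk a b) : dist a b ≤ walkWeight w q :=
  (hdist a b).2 ⟨q, rfl⟩

include hdist in
lemma dist_triangle_adj (a : V) {u v : V} (h : G.Adj u v) :
    dist a v ≤ dist a u + w s(u, v) := by
  obtain ⟨q, hq⟩ := (hdist a u).1
  have := dist_le_walk w dist hdist (q.append (SimpleGraph.Walk.cons h SimpleGraph.Walk.nil))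
  rw [walkWeight_append, walkWeight_cons] at this
  simp only [walkWeight, SimpleGraph.Walk.edges_nil, List.map_nil, List.sum_nil, add_zero] at this hq
  linarith

include hdist in
/-- Key: along a shortest continuation, the per-step inequality holds. -/
lemma key_step (s1 s2 t : V) :
    ∀ {a : V} (p : G.Walk a t), dist s1 a + walkWeight w p = dist s1 t →
    ∀ i < p.length,
      dist s1 (p.getVert i) - dist s2 (p.getVert i) ≤
        dist s1 (p.getVert (i + 1)) - dist s2 (p.getVert (i + 1)) := by
  intro a p
  induction p with
  | nil => intro _ i hi; simp at hi
  | @cons a b t hadj q ih =>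
    intro hshort i hi
    -- dist s1 b = dist s1 a + w s(a,b)
    rw [walkWeight_cons] at hshort
    have h1 : dist s1 b ≤ dist s1 a + w s(a, b) := dist_triangle_adj w dist hdist s1 hadj
    have h2 : dist s1 t ≤ dist s1 b + walkWeight w q := by
      obtain ⟨r, hr⟩ := (hdist s1 b).1
      have := dist_le_walk w dist hdist (r.append q)
      rw [walkWeight_append] at this
      linarith
    have heq : dist s1 b = dist s1 a + w s(a, b) := by linarith
    have hq' : dist s1 b + walkWeight w q = dist s1 t := by linarith
    cases i with
    | zero =>
      have h3 : dist s2 b ≤ dist s2 a + w s(a, b) := dist_triangle_adj w dist hdist s2 hadj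
      have : (SimpleGraph.Walk.cons hadj q).getVert 0 = a := rfl
      rw [this, SimpleGraph.Walk.getVert_cons_succ, SimpleGraph.Walk.getVert_zero]
      linarith
    | succ n =>
      rw [SimpleGraph.Walk.getVert_cons_succ, SimpleGraph.Walk.getVert_cons_succ]
      exact ih hq' n (by simpa [SimpleGraph.Walk.length_cons] using hi)

end aux

/-- Along a shortest path `R = (z_0 = s1, …, z_k = t)` from `s1`, the function
`i ↦ dist s1 z_i - dist s2 z_i` is nondecreasing. -/
theorem stmt4 {V : Type} (G : SimpleGraph V) (w : Sym2 V → ℝ)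
    (hw : ∀ e, 0 ≤ w e)
    (dist : V → V → ℝ)
    (hdist : ∀ a b : V, IsLeast {x : ℝ | ∃ p : G.Walk a b, walkWeight w p = x} (dist a b))
    (s1 s2 t : V) (p : G.Walk s1 t) (hp : walkWeight w p = dist s1 t)
    (i j : ℕ) (hij : i ≤ j) (hj : j < p.support.length) :
    dist s1 (p.support.get ⟨i, lt_of_le_of_lt hij hj⟩)
        - dist s2 (p.support.get ⟨i, lt_of_le_of_lt hij hj⟩) ≤
      dist s1 (p.support.get ⟨j, hj⟩) - dist s2 (p.support.get ⟨j, hj⟩) := by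
  have hs1 : dist s1 s1 = 0 := by
    have h0 : dist s1 s1 ≤ 0 := by
      have := dist_le_walk w dist hdist (SimpleGraph.Walk.nil : G.Walk s1 s1)
      simpa [walkWeight] using this
    have h1 : 0 ≤ dist s1 s1 := by
      obtain ⟨q, hq⟩ := (hdist s1 s1).1
      rw [← hq]
      exact List.sum_nonneg (fun x hx => by
        obtain ⟨e, _, rfl⟩ := List.mem_map.mp hx; exact hw e)
    linarith
  have hshort : dist s1 s1 + walkWeight w p = dist s1 t := by rw [hs1]; linarith
  rw [support_get_eq_getVert, support_get_eq_getVert]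
  have hlen : p.support.length = p.length + 1 := SimpleGraph.Walk.length_support p
  have step := key_step w dist hdist s1 s2 t p hshort
  clear hp hshort hs1
  induction j with
  | zero => simp_all
  | succ n ihn =>
    rcases Nat.lt_or_ge i (n+1) with h | h
    · have hn : n < p.support.length := by omega
      have : dist s1 (p.getVert i) - dist s2 (p.getVert i) ≤
          dist s1 (p.getVert n) - dist s2 (p.getVert n) := ihn (by omega) hn
      have hstep := step n (by omega)
      linarith
    · have : i = n + 1 := by omega
      subst this; rfl
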